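/- arXiv:math/0406239 — 3 statements merged into one kernel-verified Lean document; each statement's English description precedes it below -/
import Mathlib

section
/- Let A be a k-algebra, δ a derivation on A, x ∈ A, y ∈ A, and α, β ∈ k. Then for every natural number n, (δ - (α+β)·id)^n(xy) = Σ_{i=0}^n binomial(n,i) · (δ - α·id)^i(x) · (δ - β·id)^{n-i}(y). -/
/-- For a derivation `δ` on a (not necessarily associative or commutative)
`k`-algebra `A`, elements `x, y ∈ A`, scalars `α, β ∈ k` and any `n ∈ ℕ`,
`(δ - (α+β)·id)^n (xy) = Σ_{i=0}^n C(n,i) (δ - α·id)^i(x) · (δ - β·id)^{n-i}(y)`. -/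
theorem derivation_shifted_leibniz_pow
    {k A : Type} [Field k]
    [NonUnitalNonAssocRing A] [Module k A] [SMulCommClass k A A] [IsScalarTower k A A]
    (δ : Module.End k A)
    (hder : ∀ x y : A, δ (x * y) = x * δ y + δ x * y)
    (x y : A) (α β : k) (n : ℕ) :
    ((δ - (α + β) • 1 : Module.End k A) ^ n) (x * y)
      = ∑ i ∈ Finset.range (n + 1), (n.choose i : k) •
          ((((δ - α • 1 : Module.End k A) ^ i) x) * (((δ - β • 1 : Module.End k A) ^ (n - i)) y)) := by
  set D1 : Module.End k A := δ - α • 1 with hD1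
  set D2 : Module.End k A := δ - β • 1 with hD2
  set D : Module.End k A := δ - (α + β) • 1 with hDdef
  have hD : ∀ u v : A, D (u * v) = D1 u * v + u * D2 v := by
    intro u v
    simp only [hDdef, hD1, hD2, LinearMap.sub_apply, LinearMap.smul_apply,
      Module.End.one_apply, LinearMap.add_apply, hder, add_smul, smul_mul_assoc, mul_smul_comm, sub_mul, mul_sub]
    abel
  induction n with
  | zero => simp
  | succ n ih =>
    have hpow : ∀ (T : Module.End k A) (m : ℕ) (z : A), (T ^ (m + 1)) z = T ((T ^ m) z) := by
      intro T m z
      rw [pow_succ', Module.End.mul_apply]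
    rw [hpow, ih, map_sum]
    have step : ∀ i ∈ Finset.range (n + 1),
        D ((n.choose i : k) • ((D1 ^ i) x * (D2 ^ (n - i)) y))
          = (n.choose i : k) • ((D1 ^ (i + 1)) x * (D2 ^ (n + 1 - (i + 1))) y)
            + (n.choose i : k) • ((D1 ^ i) x * (D2 ^ (n + 1 - i)) y) := by
      intro i hi
      rw [Finset.mem_range] at hi
      have h1 : n + 1 - (i + 1) = n - i := by omega
      have h2 : n + 1 - i = (n - i) + 1 := by omega
      rw [map_smul, hD, smul_add, h1, h2, hpow, hpow]
    rw [Finset.sum_congr rfl step, Finset.sum_add_distrib]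
    -- abbreviation for the generic term
    set t : ℕ → A := fun i => (D1 ^ i) x * (D2 ^ (n + 1 - i)) y with ht
    have rhs_split : ∑ i ∈ Finset.range (n + 2), ((n + 1).choose i : k) • t i
        = ∑ i ∈ Finset.range (n + 1), ((n + 1).choose (i + 1) : k) • t (i + 1)
          + ((n + 1).choose 0 : k) • t 0 := Finset.sum_range_succ' _ _
    rw [rhs_split]
    have pascal : ∀ i, ((n + 1).choose (i + 1) : k) = (n.choose i : k) + (n.choose (i + 1) : k) := by
      intro i
      rw [Nat.choose_succ_succ]
      push_cast
      ring
    have : ∑ i ∈ Finset.range (n + 1), ((n + 1).choose (i + 1) : k) • t (i + 1)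
        = ∑ i ∈ Finset.range (n + 1), (n.choose i : k) • t (i + 1)
          + ∑ i ∈ Finset.range (n + 1), (n.choose (i + 1) : k) • t (i + 1) := by
      rw [← Finset.sum_add_distrib]
      refine Finset.sum_congr rfl fun i _ => ?_
      rw [pascal, add_smul]
    rw [this]
    have shift : ∑ i ∈ Finset.range (n + 1), (n.choose (i + 1) : k) • t (i + 1)
          + ((n + 1).choose 0 : k) • t 0
        = ∑ i ∈ Finset.range (n + 1), (n.choose i : k) • t i := by
      have h0 : ((n + 1).choose 0 : k) • t 0 = (n.choose 0 : k) • t 0 := by simp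
      rw [h0, ← Finset.sum_range_succ' (fun i => (n.choose i : k) • t i) (n + 1),
        Finset.sum_range_succ]
      simp
    rw [add_assoc, shift]
end

section
/- Let A = ⊕_{i∈ℤ} A_i be a ℤ-graded ℂ-algebra with grading derivation δ (δ(a) = i·a for a ∈ A_i), and let ∂ = Σ_{i=k}^{l} ∂_i be a locally nilpotent derivation with pairwise commuting homogeneous components ∂_i of strictly positive degrees i ≥ k > 0. Set ∂' = Σ_{i=k}^{l} ∂_i / i. Then ∂' is a locally nilpotent derivation and [δ, ∂'] = ∂. -/
/-- Let `A = ⊕_{i∈ℤ} A_i` be a ℤ-graded ℂ-algebra with grading derivation `δ`,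
and `∂ = Σ_{i=p}^{q} ∂_i` a locally nilpotent derivation with pairwise commuting homogeneous
components `∂_i` of strictly positive degrees (`0 < p ≤ i`). Then `∂' = Σ_{i=p}^{q} ∂_i/i` is a
locally nilpotent derivation with `[δ,∂'] = ∂`. -/
theorem primitive_of_locally_nilpotent_derivation
    {A : Type} [Ring A] [Algebra ℂ A]
    (𝒜 : ℤ → Submodule ℂ A)
    (hint : DirectSum.IsInternal 𝒜)
    (δ : Module.End ℂ A)
    (hδ : ∀ i : ℤ, ∀ a ∈ 𝒜 i, δ a = (i : ℂ) • a)
    (p q : ℤ) (hpq : p ≤ q) (hp : 0 < p)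
    (D : ℤ → Module.End ℂ A)
    (hder : ∀ i : ℤ, ∀ x y : A, D i (x * y) = x * D i y + D i x * y)
    (hhom : ∀ (i j : ℤ), ∀ x ∈ 𝒜 j, D i x ∈ 𝒜 (i + j))
    (hcomm : ∀ i j : ℤ, D i * D j = D j * D i)
    (hln : ∀ a : A, ∃ n : ℕ, ((∑ i ∈ Finset.Icc p q, D i) ^ n) a = 0) :
    (∀ x y : A, (∑ i ∈ Finset.Icc p q, ((i : ℂ)⁻¹) • D i) (x * y)
        = x * (∑ i ∈ Finset.Icc p q, ((i : ℂ)⁻¹) • D i) y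
          + (∑ i ∈ Finset.Icc p q, ((i : ℂ)⁻¹) • D i) x * y) ∧
    (∀ a : A, ∃ n : ℕ, ((∑ i ∈ Finset.Icc p q, ((i : ℂ)⁻¹) • D i) ^ n) a = 0) ∧
    (δ * (∑ i ∈ Finset.Icc p q, ((i : ℂ)⁻¹) • D i)
        - (∑ i ∈ Finset.Icc p q, ((i : ℂ)⁻¹) • D i) * δ
      = ∑ i ∈ Finset.Icc p q, D i) := by
  -- Part 1 : Leibniz rule
  have part1 : ∀ x y : A, (∑ i ∈ Finset.Icc p q, ((i : ℂ)⁻¹) • D i) (x * y)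
      = x * (∑ i ∈ Finset.Icc p q, ((i : ℂ)⁻¹) • D i) y
        + (∑ i ∈ Finset.Icc p q, ((i : ℂ)⁻¹) • D i) x * y := by
    intro x y
    simp only [LinearMap.sum_apply, LinearMap.smul_apply, hder, smul_add, Finset.mul_sum,
      Finset.sum_mul, mul_smul_comm, smul_mul_assoc, Finset.sum_add_distrib]
  -- membership helper for truncated sups
  have memlt : ∀ (m c : ℤ), m < c → ∀ x ∈ 𝒜 m,
      x ∈ ⨆ m ∈ {m : ℤ | m < c}, 𝒜 m := by
    intro m c h x hx
    exact Submodule.mem_iSup_of_mem m (Submodule.mem_iSup_of_mem h hx)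
  have supMono : ∀ c₁ c₂ : ℤ, c₁ ≤ c₂ →
      (⨆ m ∈ {m : ℤ | m < c₁}, 𝒜 m) ≤ ⨆ m ∈ {m : ℤ | m < c₂}, 𝒜 m := by
    intro c₁ c₂ h
    exact biSup_mono fun m hm => lt_of_lt_of_le hm h
  have mapD : ∀ (i c : ℤ) (x : A), x ∈ (⨆ m ∈ {m : ℤ | m < c}, 𝒜 m) →
      D i x ∈ ⨆ m ∈ {m : ℤ | m < c + i}, 𝒜 m := by
    intro i c x hx
    have hle : (⨆ m ∈ {m : ℤ | m < c}, 𝒜 m)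
        ≤ Submodule.comap (D i) (⨆ m ∈ {m : ℤ | m < c + i}, 𝒜 m) := by
      refine iSup₂_le fun m hm => fun y hy => ?_
      have hm' : m < c := hm
      exact memlt (i + m) (c + i) (by omega) _ (hhom i m y hy)
    exact hle hx
  have powD : ∀ (r d : ℤ) (n : ℕ) (a : A), a ∈ 𝒜 d → ((D r ^ n) a) ∈ 𝒜 (d + n * r) := by
    intro r d n a ha
    induction n with
    | zero => simpa using ha
    | succ n ih =>
      have h2 := hhom r _ _ ih
      have he : r + (d + (n : ℤ) * r) = d + ((n : ℕ) + 1 : ℕ) * r := by push_cast; ring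
      rw [pow_succ', Module.End.mul_apply]
      exact he ▸ h2
  have stab : ∀ (f : Module.End ℂ A) (x : A) (n k : ℕ), n ≤ k → (f ^ n) x = 0 →
      (f ^ k) x = 0 := by
    intro f x n k h h0
    have : f ^ k = f ^ (k - n) * f ^ n := by rw [← pow_add]; congr 1; omega
    rw [this, Module.End.mul_apply, h0, map_zero]
  -- key homogeneous lemma : top component extraction
  have L1 : ∀ (r : ℤ), p ≤ r → ∀ (n : ℕ) (d : ℤ) (a : A), a ∈ 𝒜 d →
      ((∑ i ∈ Finset.Icc p r, D i) ^ n) a - ((D r) ^ n) a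
        ∈ ⨆ m ∈ {m : ℤ | m < d + n * r}, 𝒜 m := by
    intro r hr n d a ha
    induction n with
    | zero => rw [pow_zero, pow_zero]; simp
    | succ n ih =>
      have hsplit : Finset.Icc p r = insert r (Finset.Icc p (r - 1)) := by
        ext x; simp; omega
      have key : ((∑ i ∈ Finset.Icc p r, D i) ^ (n + 1)) a - ((D r) ^ (n + 1)) a
          = (∑ i ∈ Finset.Icc p r, D i) (((∑ i ∈ Finset.Icc p r, D i) ^ n) a - ((D r) ^ n) a)
            + ∑ i ∈ Finset.Icc p (r - 1), D i (((D r) ^ n) a) := by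
        rw [pow_succ', pow_succ', Module.End.mul_apply, Module.End.mul_apply, map_sub]
        have hE : (∑ i ∈ Finset.Icc p r, D i) (((D r) ^ n) a)
            = D r (((D r) ^ n) a) + ∑ i ∈ Finset.Icc p (r - 1), D i (((D r) ^ n) a) := by
          rw [hsplit, Finset.sum_insert (by simp), LinearMap.add_apply, LinearMap.sum_apply]
        rw [hE]; abel
      rw [key]
      refine Submodule.add_mem _ ?_ (Submodule.sum_mem _ fun i hi => ?_)
      · rw [LinearMap.sum_apply]
        refine Submodule.sum_mem _ fun i hi => ?_
        have hmem := mapD i (d + n * r) _ ih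
        have hi' : i ≤ r := (Finset.mem_Icc.mp hi).2
        refine supMono (d + n * r + i) (d + (n + 1 : ℕ) * r) (by push_cast; nlinarith) hmem
      · have hmem := powD r d n a ha
        have := hhom i _ _ hmem
        have hi' : i ≤ r - 1 := (Finset.mem_Icc.mp hi).2
        exact memlt _ _ (by push_cast; nlinarith) _ this
  -- extraction of local nilpotency of the top component
  have extract : ∀ (r : ℤ), p ≤ r →
      (∀ a : A, ∃ n : ℕ, ((∑ i ∈ Finset.Icc p r, D i) ^ n) a = 0) →
      ∀ a : A, ∃ n : ℕ, ((D r) ^ n) a = 0 := by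
    intro r hr hE a
    have hom : ∀ d : ℤ, ∀ a ∈ 𝒜 d, ∃ n : ℕ, ((D r) ^ n) a = 0 := by
      intro d a ha
      obtain ⟨n, hn⟩ := hE a
      have h1 := L1 r hr n d a ha
      rw [hn, zero_sub] at h1
      have h1' : ((D r) ^ n) a ∈ ⨆ m ∈ {m : ℤ | m < d + n * r}, 𝒜 m :=
        (Submodule.neg_mem_iff _).mp h1
      have h2 : ((D r) ^ n) a ∈ 𝒜 (d + n * r) := powD r d n a ha
      have hd : Disjoint (𝒜 (d + n * r)) (⨆ m ∈ {m : ℤ | m < d + n * r}, 𝒜 m) :=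
        hint.submodule_iSupIndep.disjoint_biSup (by simp)
      exact ⟨n, (Submodule.disjoint_def.mp hd) _ h2 h1'⟩
    have htop : a ∈ (⊤ : Submodule ℂ A) := trivial
    rw [← hint.submodule_iSup_eq_top] at htop
    refine Submodule.iSup_induction 𝒜 (motive := fun x => ∃ n : ℕ, ((D r) ^ n) x = 0) htop
      (fun d x hx => hom d x hx) ⟨0, by simp⟩ ?_
    rintro x y ⟨n, hn⟩ ⟨m, hm⟩
    refine ⟨max n m, ?_⟩
    rw [map_add, stab _ _ n _ (le_max_left n m) hn, stab _ _ m _ (le_max_right n m) hm, add_zero]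
  -- sum of two commuting locally nilpotent endos is locally nilpotent
  have addLND : ∀ f g : Module.End ℂ A, Commute f g →
      (∀ a : A, ∃ n : ℕ, (f ^ n) a = 0) → (∀ a : A, ∃ n : ℕ, (g ^ n) a = 0) →
      ∀ a : A, ∃ n : ℕ, ((f + g) ^ n) a = 0 := by
    intro f g hc hf hg a
    obtain ⟨m, hm⟩ := hg a
    choose N hN using fun j : ℕ => hf ((g ^ j) a)
    set K := (Finset.range m).sup N with hK
    refine ⟨K + m, ?_⟩
    rw [hc.add_pow, LinearMap.sum_apply]
    refine Finset.sum_eq_zero fun i hi => ?_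
    rw [Module.End.mul_apply, Module.End.mul_apply, Module.End.natCast_apply]
    rw [map_nsmul, map_nsmul]
    by_cases h : m ≤ K + m - i
    · rw [stab g a m _ h hm, map_zero, smul_zero]
    · have hi' : i ≤ K + m := Finset.mem_range_succ_iff.mp hi
      have hj : K + m - i < m := by omega
      have hKi : K ≤ i := by omega
      have : (f ^ i) ((g ^ (K + m - i)) a) = 0 := by
        refine stab f _ (N (K + m - i)) i (le_trans ?_ hKi) (hN _)
        exact Finset.le_sup (Finset.mem_range.mpr hj)
      rw [this, smul_zero]
  have negLND : ∀ f : Module.End ℂ A, (∀ a : A, ∃ n : ℕ, (f ^ n) a = 0) →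
      ∀ a : A, ∃ n : ℕ, ((-f) ^ n) a = 0 := by
    intro f hf a
    obtain ⟨n, hn⟩ := hf a
    exact ⟨n, by rw [show (-f) ^ n = (-1) ^ n * f ^ n from neg_pow f n, Module.End.mul_apply, hn, map_zero]⟩
  -- downward induction : every partial sum is locally nilpotent
  have Esub : ∀ m : ℕ, p ≤ q - m →
      ∀ a : A, ∃ n : ℕ, ((∑ i ∈ Finset.Icc p (q - m), D i) ^ n) a = 0 := by
    intro m
    induction m with
    | zero => intro _; simpa using hln
    | succ m ih =>
      intro hm
      have hm' : p ≤ q - m := by push_cast at hm ⊢; omega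
      have hE := ih hm'
      have hD := extract (q - m) hm' hE
      have hsplit : (∑ i ∈ Finset.Icc p (q - ((m : ℕ) + 1 : ℕ)), D i)
          = (∑ i ∈ Finset.Icc p (q - m), D i) + (-(D (q - m))) := by
        have hins : Finset.Icc p (q - (m : ℤ)) =
            insert (q - (m : ℤ)) (Finset.Icc p (q - ((m : ℕ) + 1 : ℕ))) := by
          ext x; simp only [Finset.mem_Icc, Finset.mem_insert]; push_cast; omega
        rw [hins, Finset.sum_insert (by simp only [Finset.mem_Icc]; push_cast; omega)]
        abel
      rw [hsplit]
      refine addLND _ _ ?_ hE (negLND _ hD)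
      exact (Commute.sum_left _ _ _ fun i _ => (hcomm i (q - m))).neg_right
  have Dlnd : ∀ i : ℤ, p ≤ i → i ≤ q → ∀ a : A, ∃ n : ℕ, ((D i) ^ n) a = 0 := by
    intro i hpi hiq
    have h1 : (q - ((q - i).toNat : ℤ)) = i := by omega
    have := Esub (q - i).toNat (by rw [h1]; exact hpi)
    rw [h1] at this
    exact extract i hpi this
  -- Part 2 : local nilpotency of the primitive
  have smulLND : ∀ (c : ℂ) (f : Module.End ℂ A), (∀ a : A, ∃ n : ℕ, (f ^ n) a = 0) →
      ∀ a : A, ∃ n : ℕ, ((c • f) ^ n) a = 0 := by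
    intro c f hf a
    obtain ⟨n, hn⟩ := hf a
    exact ⟨n, by rw [smul_pow, LinearMap.smul_apply, hn, smul_zero]⟩
  have part2 : ∀ s : Finset ℤ, s ⊆ Finset.Icc p q →
      ∀ a : A, ∃ n : ℕ, ((∑ i ∈ s, ((i : ℂ)⁻¹) • D i) ^ n) a = 0 := by
    intro s
    induction s using Finset.induction_on with
    | empty => intro _ a; exact ⟨1, by simp⟩
    | @insert x s hx ih =>
      intro hsub
      rw [Finset.sum_insert hx]
      refine addLND _ _ ?_ ?_ (ih (fun y hy => hsub (Finset.mem_insert_of_mem hy)))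
      · refine Commute.sum_right _ _ _ fun i _ => ?_
        have hc : Commute (D x) (D i) := hcomm x i
        exact (hc.smul_left _).smul_right _
      · refine smulLND _ _ ?_
        have hx' := hsub (Finset.mem_insert_self x s)
        rw [Finset.mem_Icc] at hx'
        exact Dlnd x hx'.1 hx'.2
  -- Part 3 : the commutator identity
  have bracket : ∀ i : ℤ, δ * D i - D i * δ = (i : ℂ) • D i := by
    intro i
    have hker : (⊤ : Submodule ℂ A)
        ≤ LinearMap.ker (δ * D i - D i * δ - (i : ℂ) • D i) := by
      rw [← hint.submodule_iSup_eq_top]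
      refine iSup_le fun j => fun a ha => ?_
      simp only [LinearMap.mem_ker, LinearMap.sub_apply, Module.End.mul_apply,
        LinearMap.smul_apply]
      rw [hδ _ _ (hhom i j a ha), hδ j a ha, map_smul]
      push_cast
      rw [add_smul]
      abel
    have h0 : δ * D i - D i * δ - (i : ℂ) • D i = 0 := by
      ext a
      exact LinearMap.mem_ker.mp (hker (Submodule.mem_top (x := a)))
    exact sub_eq_zero.mp h0
  refine ⟨part1, part2 (Finset.Icc p q) (Finset.Subset.refl _), ?_⟩
  rw [Finset.mul_sum, Finset.sum_mul, ← Finset.sum_sub_distrib]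
  refine Finset.sum_congr rfl fun i hi => ?_
  have hne : (i : ℂ) ≠ 0 := by
    rw [Finset.mem_Icc] at hi
    exact_mod_cast Int.cast_ne_zero.mpr (by omega : (i : ℤ) ≠ 0)
  rw [mul_smul_comm, smul_mul_assoc, show (i : ℂ)⁻¹ • (δ * D i) - (i : ℂ)⁻¹ • (D i * δ) = (i : ℂ)⁻¹ • (δ * D i - D i * δ) from (smul_sub _ _ _).symm, bracket i, smul_smul,
    inv_mul_cancel₀ hne, one_smul]
end

section
/- Let ∂ be a locally nilpotent derivation of a commutative ring A of characteristic 0 and δ any derivation with [[δ,∂],∂] = 0. Then δ ∘ exp(∂) = exp(∂) ∘ (δ + [δ,∂]) as linear maps on A. -/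
/-- For a locally nilpotent derivation `∂` on a commutative ring `A` containing ℚ
and any derivation `δ` with `[[δ,∂],∂] = 0`, one has `δ ∘ exp(∂) = exp(∂) ∘ (δ + [δ,∂])`. -/
theorem delta_comp_exp
    {A : Type} [CommRing A] [Algebra ℚ A]
    (δ D : Module.End ℚ A)
    (hδ : ∀ x y : A, δ (x * y) = x * δ y + δ x * y)
    (hD : ∀ x y : A, D (x * y) = x * D y + D x * y)
    (hln : ∀ a : A, ∃ n : ℕ, (D ^ n) a = 0)
    (hcomm : (δ * D - D * δ) * D = D * (δ * D - D * δ))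
    (E : Module.End ℚ A)
    (hE : ∀ (a : A) (N : ℕ), (D ^ N) a = 0 →
      E a = ∑ i ∈ Finset.range N, ((Nat.factorial i : ℚ)⁻¹) • (D ^ i) a) :
    δ * E = E * (δ + (δ * D - D * δ)) := by
  set C := δ * D - D * δ with hCdef
  have hδD : δ * D = D * δ + C := by rw [hCdef]; noncomm_ring
  have hCD : ∀ k : ℕ, C * D ^ k = D ^ k * C := by
    intro k
    induction k with
    | zero => simp
    | succ k ih =>
      calc C * D ^ (k+1) = (C * D ^ k) * D := by rw [pow_succ, mul_assoc]
        _ = D ^ k * (C * D) := by rw [ih, mul_assoc]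
        _ = D ^ k * (D * C) := by rw [hcomm]
        _ = D ^ (k+1) * C := by rw [pow_succ, mul_assoc]
  have key : ∀ i : ℕ, δ * D ^ (i+1) = D ^ (i+1) * δ + (i+1) • (C * D ^ i) := by
    intro i
    induction i with
    | zero => simp [hδD]
    | succ i ih =>
      calc δ * D ^ (i+2) = (δ * D ^ (i+1)) * D := by rw [pow_succ, mul_assoc]
        _ = D ^ (i+1) * (δ * D) + (i+1) • (C * (D ^ i * D)) := by
            rw [ih, add_mul, smul_mul_assoc, mul_assoc, mul_assoc]
        _ = D ^ (i+1) * (D * δ) + D ^ (i+1) * C + (i+1) • (C * D ^ (i+1)) := by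
            rw [hδD, mul_add, ← pow_succ, add_assoc]
        _ = D ^ (i+2) * δ + (C * D ^ (i+1) + (i+1) • (C * D ^ (i+1))) := by
            rw [hCD, ← mul_assoc, ← pow_succ, add_assoc]
        _ = D ^ (i+2) * δ + (i+2) • (C * D ^ (i+1)) := by
            congr 1; rw [show i+2 = (i+1)+1 by ring, succ_nsmul, add_comm, succ_nsmul, succ_nsmul]
  -- monotonicity of vanishing
  have hmono : ∀ (x : A) (n m : ℕ), n ≤ m → (D ^ n) x = 0 → (D ^ m) x = 0 := by
    intro x n m hnm h
    obtain ⟨k, rfl⟩ := Nat.exists_eq_add_of_le hnm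
    rw [add_comm, pow_add, Module.End.mul_apply, h, map_zero]
  ext a
  obtain ⟨n1, h1⟩ := hln a
  obtain ⟨n2, h2⟩ := hln (δ a)
  obtain ⟨n3, h3⟩ := hln (C a)
  set M := n1 + n2 + n3 with hM
  have hA : (D ^ (M+1)) a = 0 := hmono a n1 (M+1) (by omega) h1
  have hB : (D ^ (M+1)) (δ a) = 0 := hmono (δ a) n2 (M+1) (by omega) h2
  have hCa : ∀ m, n3 ≤ m → (D ^ m) (C a) = 0 := fun m hm => hmono (C a) n3 m hm h3
  have hsum : (D ^ (M+1)) (δ a + C a) = 0 := by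
    rw [map_add, hB, hCa (M+1) (by omega), add_zero]
  have lhs : (δ * E) a = ∑ i ∈ Finset.range (M+1),
      ((Nat.factorial i : ℚ)⁻¹) • δ ((D ^ i) a) := by
    rw [Module.End.mul_apply, hE a (M+1) hA, map_sum]
    simp [map_smul]
  have rhs : (E * (δ + C)) a = (∑ i ∈ Finset.range (M+1),
      ((Nat.factorial i : ℚ)⁻¹) • (D ^ i) (δ a)) + ∑ i ∈ Finset.range (M+1),
      ((Nat.factorial i : ℚ)⁻¹) • (D ^ i) (C a) := by
    rw [Module.End.mul_apply]
    have : (δ + C) a = δ a + C a := rfl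
    rw [this, hE _ (M+1) hsum, ← Finset.sum_add_distrib]
    exact Finset.sum_congr rfl (fun i _ => by rw [map_add, smul_add])
  rw [lhs, rhs]
  -- termwise
  have term : ∀ i : ℕ, ((Nat.factorial (i+1) : ℚ)⁻¹) • δ ((D ^ (i+1)) a)
      = ((Nat.factorial (i+1) : ℚ)⁻¹) • (D ^ (i+1)) (δ a)
        + ((Nat.factorial i : ℚ)⁻¹) • (D ^ i) (C a) := by
    intro i
    have hk := congrFun (congrArg DFunLike.coe (key i)) a
    simp only [Module.End.mul_apply, LinearMap.add_apply, LinearMap.smul_apply] at hk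
    rw [hk, smul_add]
    congr 1
    have hcd := congrFun (congrArg DFunLike.coe (hCD i)) a
    simp only [Module.End.mul_apply] at hcd
    rw [hcd]
    rw [smul_comm]
    rw [← Nat.cast_smul_eq_nsmul ℚ, smul_smul]
    congr 1
    rw [Nat.factorial_succ]
    push_cast
    rw [mul_inv]
    field_simp
  -- sum over range (M+1) with shift
  rw [Finset.sum_range_succ' (fun i => ((Nat.factorial i : ℚ)⁻¹) • δ ((D ^ i) a)) M]
  rw [Finset.sum_range_succ (fun i => ((Nat.factorial i : ℚ)⁻¹) • (D ^ i) (C a)) M]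
  rw [hCa M (by omega)]
  simp only [term, smul_zero, add_zero]
  rw [Finset.sum_add_distrib]
  rw [Finset.sum_range_succ' (fun i => ((Nat.factorial i : ℚ)⁻¹) • (D ^ i) (δ a)) M]
  simp [Nat.factorial_zero]
  abel
end
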